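/- arXiv:0801.3850 — 5 statements merged into one kernel-verified Lean document; each statement's English description precedes it below -/
import Mathlib

section
/- Let m, n ≥ 1 be integers, δ ∈ (0,1], λ_1, …, λ_m real numbers with λ_i² ≤ 1 − δ for every i, and h(i,k,α) real numbers for 1 ≤ i,k ≤ m and 1 ≤ α ≤ n. For 1 ≤ i,k,j ≤ m set H(i,k,j) = h(i,k,j) if j ≤ n and H(i,k,j) = 0 if j > n. Then ∑_{i,k=1}^m ∑_{α=1}^n h(i,k,α)² − ∑_{i,k=1}^m λ_i² H(i,k,i)² − 2 ∑_{k=1}^m ∑_{1 ≤ i < j ≤ m} λ_i λ_j H(i,k,j) H(j,k,i) ≥ δ · ∑_{i,k=1}^m ∑_{α=1}^n h(i,k,α)². -/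
/-- Extension of the second-fundamental-form components `h i k α` (`α < n`) by zero to
a third index ranging over `Fin m`: `H(i,k,j) = h(i,k,j)` if `j ≤ n`, and `0` if `j > n`. -/
def Hext {m n : ℕ} (h : Fin m → Fin m → Fin n → ℝ) (i k j : Fin m) : ℝ :=
  if hj : (j : ℕ) < n then h i k ⟨j, hj⟩ else 0

lemma sum_Hext_sq_le {m n : ℕ} (h : Fin m → Fin m → Fin n → ℝ) (i k : Fin m) :
    ∑ j, Hext h i k j ^ 2 ≤ ∑ α, h i k α ^ 2 := by
  classical
  set g : ℕ → ℝ := fun t => if ht : t < n then h i k ⟨t, ht⟩ else 0 with hg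
  have h1 : ∑ j : Fin m, Hext h i k j ^ 2 = ∑ t ∈ Finset.range m, g t ^ 2 := by
    rw [← Fin.sum_univ_eq_sum_range (fun t => g t ^ 2) m]
    rfl
  have h2 : ∑ α : Fin n, h i k α ^ 2 = ∑ t ∈ Finset.range n, g t ^ 2 := by
    rw [← Fin.sum_univ_eq_sum_range (fun t => g t ^ 2) n]
    refine Finset.sum_congr rfl fun α _ => ?_
    simp [hg]
  rw [h1, h2]
  have step1 : ∑ t ∈ Finset.range m, g t ^ 2 ≤ ∑ t ∈ Finset.range (max m n), g t ^ 2 :=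
    Finset.sum_le_sum_of_subset_of_nonneg
      (Finset.range_subset_range.2 (le_max_left m n)) (fun t _ _ => sq_nonneg _)
  have step2 : ∑ t ∈ Finset.range n, g t ^ 2 = ∑ t ∈ Finset.range (max m n), g t ^ 2 := by
    refine Finset.sum_subset (Finset.range_subset_range.2 (le_max_right m n)) ?_
    intro t _ ht
    have : ¬ t < n := by simpa using ht
    simp [hg, this]
  rw [step2]; exact step1

/-- **The key algebraic inequality (4.5) of the paper.**  If `λ_i² ≤ 1 - δ` for all `i`
(with `0 < δ ≤ 1`), then
`‖B‖² - ∑_{i,k} λ_i² H(i,k,i)² - 2 ∑_k ∑_{i<j} λ_i λ_j H(i,k,j) H(j,k,i) ≥ δ ‖B‖²`,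
where `‖B‖² = ∑_{i,k,α} h(i,k,α)²`. -/
theorem key_inequality (m n : ℕ) (hm : 1 ≤ m) (hn : 1 ≤ n)
    (δ : ℝ) (hδ0 : 0 < δ) (hδ1 : δ ≤ 1)
    (lam : Fin m → ℝ) (hlam : ∀ i, lam i ^ 2 ≤ 1 - δ)
    (h : Fin m → Fin m → Fin n → ℝ) :
    δ * (∑ i, ∑ k, ∑ α, h i k α ^ 2) ≤
      (∑ i, ∑ k, ∑ α, h i k α ^ 2) - (∑ i, ∑ k, lam i ^ 2 * Hext h i k i ^ 2) -
        2 * ∑ k, ∑ i, ∑ j,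
          if i < j then lam i * lam j * Hext h i k j * Hext h j k i else 0 := by
  classical
  set g : Fin m → Fin m → Fin m → ℝ :=
    fun k i j => lam i * lam j * Hext h i k j * Hext h j k i with hgdef
  -- split each full double sum into diagonal + twice the strict upper part
  have hsplit : ∀ k, ∑ i, ∑ j, g k i j
      = (∑ i, g k i i) + 2 * ∑ i, ∑ j, (if i < j then g k i j else 0) := by
    intro k
    have hdec : ∀ i j : Fin m, g k i j =
        (if i = j then g k i j else 0) + (if i < j then g k i j else 0)
          + (if j < i then g k i j else 0) := by
      intro i j
      rcases lt_trichotomy i j with hij | hij | hij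
      · simp [hij, hij.ne, not_lt_of_gt hij]
      · simp [hij, lt_irrefl]
      · simp [hij, (hij.ne).symm, not_lt_of_gt hij, hij.ne]
    calc ∑ i, ∑ j, g k i j
        = ∑ i, ∑ j, ((if i = j then g k i j else 0) + (if i < j then g k i j else 0)
            + (if j < i then g k i j else 0)) := by
          refine Finset.sum_congr rfl fun i _ => Finset.sum_congr rfl fun j _ => hdec i j
      _ = (∑ i, ∑ j, (if i = j then g k i j else 0))
            + (∑ i, ∑ j, (if i < j then g k i j else 0))
            + (∑ i, ∑ j, (if j < i then g k i j else 0)) := by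
          simp [Finset.sum_add_distrib]
      _ = (∑ i, g k i i) + 2 * ∑ i, ∑ j, (if i < j then g k i j else 0) := by
          have e1 : (∑ i, ∑ j, (if i = j then g k i j else 0)) = ∑ i : Fin m, g k i i := by
            refine Finset.sum_congr rfl fun i _ => ?_
            simp
          have e2 : (∑ i, ∑ j, (if j < i then g k i j else 0))
              = ∑ i, ∑ j, (if i < j then g k i j else 0) := by
            rw [Finset.sum_comm]
            refine Finset.sum_congr rfl fun i _ => Finset.sum_congr rfl fun j _ => ?_
            by_cases hij : i < j
            · simp only [hij, if_true, hgdef]; ring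
            · simp [hij]
          rw [e1, e2]; ring
  -- pointwise bound
  have key : ∀ k i j : Fin m, g k i j
      ≤ (1 - δ) / 2 * (Hext h i k j ^ 2 + Hext h j k i ^ 2) := by
    intro k i j
    have h1 := hlam i
    have h2 := hlam j
    simp only [hgdef]
    nlinarith [sq_nonneg (lam i * Hext h i k j - lam j * Hext h j k i),
      mul_nonneg (sub_nonneg.2 h1) (sq_nonneg (Hext h i k j)),
      mul_nonneg (sub_nonneg.2 h2) (sq_nonneg (Hext h j k i))]
  -- total bound
  have hQ : ∑ k, ∑ i, ∑ j, g k i j ≤ (1 - δ) * (∑ i, ∑ k, ∑ α, h i k α ^ 2) := by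
    have step1 : ∑ k, ∑ i, ∑ j, g k i j
        ≤ ∑ k, ∑ i, ∑ j, (1 - δ) / 2 * (Hext h i k j ^ 2 + Hext h j k i ^ 2) := by
      refine Finset.sum_le_sum fun k _ => Finset.sum_le_sum fun i _ =>
        Finset.sum_le_sum fun j _ => key k i j
    have swap : ∀ k : Fin m, ∑ i, ∑ j, (Hext h j k i ^ 2 : ℝ) = ∑ i, ∑ j, Hext h i k j ^ 2 :=
      fun k => Finset.sum_comm
    have step2 : ∑ k, ∑ i, ∑ j, (1 - δ) / 2 * (Hext h i k j ^ 2 + Hext h j k i ^ 2)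
        = (1 - δ) * ∑ k, ∑ i, ∑ j, Hext h i k j ^ 2 := by
      rw [Finset.mul_sum]
      refine Finset.sum_congr rfl fun k _ => ?_
      have this1 : ∑ i, ∑ j, (1 - δ) / 2 * (Hext h i k j ^ 2 + Hext h j k i ^ 2)
          = (1 - δ) / 2 * ((∑ i, ∑ j, Hext h i k j ^ 2) + ∑ i, ∑ j, Hext h j k i ^ 2) := by
        simp [Finset.mul_sum, Finset.sum_add_distrib, mul_add]
      rw [this1, swap k]; ring
    have step3 : ∑ k, ∑ i, ∑ j, (Hext h i k j ^ 2 : ℝ) ≤ ∑ i, ∑ k, ∑ α, h i k α ^ 2 := by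
      rw [Finset.sum_comm]
      exact Finset.sum_le_sum fun i _ => Finset.sum_le_sum fun k _ => sum_Hext_sq_le h i k
    calc ∑ k, ∑ i, ∑ j, g k i j
        ≤ ∑ k, ∑ i, ∑ j, (1 - δ) / 2 * (Hext h i k j ^ 2 + Hext h j k i ^ 2) := step1
      _ = (1 - δ) * ∑ k, ∑ i, ∑ j, Hext h i k j ^ 2 := step2
      _ ≤ (1 - δ) * (∑ i, ∑ k, ∑ α, h i k α ^ 2) := by
          have hδ' : (0:ℝ) ≤ 1 - δ := by linarith
          exact mul_le_mul_of_nonneg_left step3 hδ'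
  -- identify the pieces in the goal
  have hAB : (∑ i, ∑ k, lam i ^ 2 * Hext h i k i ^ 2)
      + 2 * (∑ k, ∑ i, ∑ j,
          if i < j then lam i * lam j * Hext h i k j * Hext h j k i else 0)
      = ∑ k, ∑ i, ∑ j, g k i j := by
    have e1 : (∑ i, ∑ k, lam i ^ 2 * Hext h i k i ^ 2) = ∑ k, ∑ i, g k i i := by
      rw [Finset.sum_comm]
      refine Finset.sum_congr rfl fun k _ => Finset.sum_congr rfl fun i _ => ?_
      simp [hgdef]; ring
    have e2 : ∀ k, (∑ i, ∑ j,
        (if i < j then lam i * lam j * Hext h i k j * Hext h j k i else 0))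
        = ∑ i, ∑ j, (if i < j then g k i j else 0) := fun k => rfl
    calc (∑ i, ∑ k, lam i ^ 2 * Hext h i k i ^ 2)
          + 2 * (∑ k, ∑ i, ∑ j,
            if i < j then lam i * lam j * Hext h i k j * Hext h j k i else 0)
        = ∑ k, ((∑ i, g k i i) + 2 * ∑ i, ∑ j, (if i < j then g k i j else 0)) := by
          rw [e1, Finset.sum_add_distrib, Finset.mul_sum]
      _ = ∑ k, ∑ i, ∑ j, g k i j := by
          exact (Finset.sum_congr rfl fun k _ => (hsplit k).symm)
  linarith [hQ, hAB]
end

section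
/- Let n ≥ 1 be an integer, λ_1, λ_2 real numbers with λ_1² ≤ 1 and λ_2² ≤ 1, and h(i,k,α) real numbers for i,k ∈ {1,2} and 1 ≤ α ≤ n, which are symmetric in (i,k) (h(i,k,α) = h(k,i,α)) and trace-free (h(1,1,α) + h(2,2,α) = 0 for every α). For i,k,j ∈ {1,2} set H(i,k,j) = h(i,k,j) if j ≤ n and H(i,k,j) = 0 if j > n. Then ∑_{i,k=1}^2 ∑_{α=1}^n h(i,k,α)² − 2 λ_1 λ_2 [ H(1,1,1)H(1,2,2) + H(1,2,1)H(2,2,2) + H(1,1,2)H(1,2,1) + H(1,2,2)H(2,2,1) ] − 2 ∑_{i,k=1}^2 λ_i² H(i,k,i)² ≥ 0. -/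
/-- Extension of the second-fundamental-form components `h i k α` (`α < n`) by zero to
a third index ranging over `Fin 2`: `H(i,k,j) = h(i,k,j)` if `j ≤ n`, and `0` if `j > n`.
(Indices are 0-based: `0, 1` stand for the paper's `1, 2`.) -/
def Hext2 {n : ℕ} (h : Fin 2 → Fin 2 → Fin n → ℝ) (i k : Fin 2) (j : Fin 2) : ℝ :=
  if hj : (j : ℕ) < n then h i k ⟨j, hj⟩ else 0

lemma two_le_sum_aux {n : ℕ} (h2 : 2 ≤ n) (f : Fin n → ℝ) (hf : ∀ α, 0 ≤ f α) :
    f ⟨0, by omega⟩ + f ⟨1, by omega⟩ ≤ ∑ α, f α := by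
  have hne : (⟨0, by omega⟩ : Fin n) ≠ ⟨1, by omega⟩ := by
    simp [Fin.ext_iff]
  calc f ⟨0, by omega⟩ + f ⟨1, by omega⟩
      = ∑ α ∈ ({⟨0, by omega⟩, ⟨1, by omega⟩} : Finset (Fin n)), f α :=
        (Finset.sum_pair hne).symm
    _ ≤ ∑ α, f α := Finset.sum_le_sum_of_subset_of_nonneg (Finset.subset_univ _)
        (fun i _ _ => hf i)

/-- **The algebraic inequality (5.2) of the paper** (surface case `m = 2`).  If the
`h(i,k,α)` are symmetric in `(i,k)` and trace-free, and `λ₁² ≤ 1`, `λ₂² ≤ 1`, then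
`‖B‖² - 2 λ₁ λ₂ [H(1,1,1)H(1,2,2) + H(1,2,1)H(2,2,2) + H(1,1,2)H(1,2,1) + H(1,2,2)H(2,2,1)]
  - 2 ∑_{i,k} λ_i² H(i,k,i)² ≥ 0`. -/
theorem surface_inequality (n : ℕ) (hn : 1 ≤ n) (lam : Fin 2 → ℝ)
    (hlam : ∀ i, lam i ^ 2 ≤ 1)
    (h : Fin 2 → Fin 2 → Fin n → ℝ)
    (hsymm : ∀ i k α, h i k α = h k i α)
    (htrace : ∀ α, h 0 0 α + h 1 1 α = 0) :
    0 ≤ (∑ i, ∑ k, ∑ α, h i k α ^ 2) -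
        2 * lam 0 * lam 1 *
          (Hext2 h 0 0 0 * Hext2 h 0 1 1 + Hext2 h 0 1 0 * Hext2 h 1 1 1 +
            Hext2 h 0 0 1 * Hext2 h 0 1 0 + Hext2 h 0 1 1 * Hext2 h 1 1 0) -
        2 * ∑ i, ∑ k, lam i ^ 2 * Hext2 h i k i ^ 2 := by
  rcases Nat.lt_or_ge n 2 with h2 | h2
  · -- n = 1
    interval_cases n
    simp only [Fin.sum_univ_two, Fin.sum_univ_one, Hext2]
    norm_num
    have hb := hsymm 1 0 0
    have ht := htrace 0
    have h0 := hlam 0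
    have h1 := hlam 1
    have q1 : h 1 0 0 ^ 2 = h 0 1 0 ^ 2 := by rw [hb]
    have q2 : h 1 1 0 ^ 2 = h 0 0 0 ^ 2 := by
      linear_combination (h 1 1 0 - h 0 0 0) * ht
    have p1 : lam 0 ^ 2 * h 0 0 0 ^ 2 ≤ h 0 0 0 ^ 2 := by
      simpa using mul_le_mul_of_nonneg_right h0 (sq_nonneg (h 0 0 0))
    have p2 : lam 0 ^ 2 * h 0 1 0 ^ 2 ≤ h 0 1 0 ^ 2 := by
      simpa using mul_le_mul_of_nonneg_right h0 (sq_nonneg (h 0 1 0))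
    linarith
  · -- n ≥ 2
    have hH : ∀ i k (j : Fin 2), Hext2 h i k j = h i k ⟨j, lt_of_lt_of_le j.isLt h2⟩ :=
      fun i k j => dif_pos _
    simp only [Fin.sum_univ_two, hH]
    have e0 : (⟨((0 : Fin 2) : ℕ), lt_of_lt_of_le (0 : Fin 2).isLt h2⟩ : Fin n)
        = ⟨0, by omega⟩ := rfl
    have e1 : (⟨((1 : Fin 2) : ℕ), lt_of_lt_of_le (1 : Fin 2).isLt h2⟩ : Fin n)
        = ⟨1, by omega⟩ := rfl
    rw [e0, e1]
    set α0 : Fin n := ⟨0, by omega⟩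
    set α1 : Fin n := ⟨1, by omega⟩
    have S00 := two_le_sum_aux h2 (fun α => h 0 0 α ^ 2) (fun α => sq_nonneg _)
    have S01 := two_le_sum_aux h2 (fun α => h 0 1 α ^ 2) (fun α => sq_nonneg _)
    have S10 := two_le_sum_aux h2 (fun α => h 1 0 α ^ 2) (fun α => sq_nonneg _)
    have S11 := two_le_sum_aux h2 (fun α => h 1 1 α ^ 2) (fun α => sq_nonneg _)
    have hb0 := hsymm 1 0 α0
    have hb1 := hsymm 1 0 α1
    have ht0 := htrace α0
    have ht1 := htrace α1
    have h0 := hlam 0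
    have h1 := hlam 1
    have hcross : h 0 0 α0 * h 0 1 α1 + h 0 1 α0 * h 1 1 α1 + h 0 0 α1 * h 0 1 α0 +
        h 0 1 α1 * h 1 1 α0 = 0 := by
      linear_combination h 0 1 α0 * ht1 + h 0 1 α1 * ht0
    rw [hcross, mul_zero]
    have q1 : h 1 0 α0 ^ 2 = h 0 1 α0 ^ 2 := by rw [hb0]
    have q2 : h 1 0 α1 ^ 2 = h 0 1 α1 ^ 2 := by rw [hb1]
    have q3 : h 1 1 α0 ^ 2 = h 0 0 α0 ^ 2 := by
      linear_combination (h 1 1 α0 - h 0 0 α0) * ht0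
    have q4 : h 1 1 α1 ^ 2 = h 0 0 α1 ^ 2 := by
      linear_combination (h 1 1 α1 - h 0 0 α1) * ht1
    have p1 : lam 0 ^ 2 * h 0 0 α0 ^ 2 ≤ h 0 0 α0 ^ 2 := by
      simpa using mul_le_mul_of_nonneg_right h0 (sq_nonneg (h 0 0 α0))
    have p2 : lam 0 ^ 2 * h 0 1 α0 ^ 2 ≤ h 0 1 α0 ^ 2 := by
      simpa using mul_le_mul_of_nonneg_right h0 (sq_nonneg (h 0 1 α0))
    have p3 : lam 1 ^ 2 * h 1 0 α1 ^ 2 ≤ h 1 0 α1 ^ 2 := by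
      simpa using mul_le_mul_of_nonneg_right h1 (sq_nonneg (h 1 0 α1))
    have p4 : lam 1 ^ 2 * h 1 1 α1 ^ 2 ≤ h 1 1 α1 ^ 2 := by
      simpa using mul_le_mul_of_nonneg_right h1 (sq_nonneg (h 1 1 α1))
    linarith
end

section
/- Let n ≥ 1 be an integer, λ_1, λ_2 real numbers with λ_1² < 1 and λ_2² < 1, and h(i,k,α) real numbers for i,k ∈ {1,2} and 1 ≤ α ≤ n, symmetric in (i,k) and trace-free (h(1,1,α) + h(2,2,α) = 0 for every α). With H(i,k,j) = h(i,k,j) if j ≤ n and H(i,k,j) = 0 if j > n, suppose equality holds: ∑_{i,k=1}^2 ∑_{α=1}^n h(i,k,α)² − 2 λ_1 λ_2 [ H(1,1,1)H(1,2,2) + H(1,2,1)H(2,2,2) + H(1,1,2)H(1,2,1) + H(1,2,2)H(2,2,1) ] − 2 ∑_{i,k=1}^2 λ_i² H(i,k,i)² = 0. Then h(i,k,α) = 0 for all i, k, α. -/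
/-- **Equality case of inequality (5.2) of the paper.**  If the `h(i,k,α)` are symmetric
in `(i,k)` and trace-free, `λ₁² < 1`, `λ₂² < 1`, and equality holds in (5.2), then all
components `h(i,k,α)` vanish (the surface is totally geodesic). -/
theorem surface_equality_case (n : ℕ) (hn : 1 ≤ n) (lam : Fin 2 → ℝ)
    (hlam : ∀ i, lam i ^ 2 < 1)
    (h : Fin 2 → Fin 2 → Fin n → ℝ)
    (hsymm : ∀ i k α, h i k α = h k i α)
    (htrace : ∀ α, h 0 0 α + h 1 1 α = 0)
    (heq : (∑ i, ∑ k, ∑ α, h i k α ^ 2) -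
        2 * lam 0 * lam 1 *
          (Hext2 h 0 0 0 * Hext2 h 0 1 1 + Hext2 h 0 1 0 * Hext2 h 1 1 1 +
            Hext2 h 0 0 1 * Hext2 h 0 1 0 + Hext2 h 0 1 1 * Hext2 h 1 1 0) -
        2 * (∑ i, ∑ k, lam i ^ 2 * Hext2 h i k i ^ 2) = 0) :
    ∀ i k α, h i k α = 0 := by
  set a := lam 0 with ha
  set b := lam 1 with hb
  have v0 : ((0 : Fin 2) : ℕ) = 0 := rfl
  have v1 : ((1 : Fin 2) : ℕ) = 1 := rfl
  -- basic facts about Hext2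
  have hH11 : ∀ j, Hext2 h 1 1 j = - Hext2 h 0 0 j := by
    intro j; unfold Hext2
    by_cases hj : (j : ℕ) < n
    · rw [dif_pos hj, dif_pos hj]
      have := htrace ⟨j, hj⟩; linarith
    · rw [dif_neg hj, dif_neg hj]; ring
  have hH10 : ∀ j, Hext2 h 1 0 j = Hext2 h 0 1 j := by
    intro j; unfold Hext2
    by_cases hj : (j : ℕ) < n
    · rw [dif_pos hj, dif_pos hj]; exact hsymm 1 0 _
    · rw [dif_neg hj, dif_neg hj]
  have hH0 : ∀ i k, Hext2 h i k 0 = h i k ⟨0, by omega⟩ := by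
    intro i k; unfold Hext2
    rw [dif_pos (show ((0 : Fin 2) : ℕ) < n by omega)]
    exact congrArg _ (Fin.ext v0)
  -- the slice function
  set g : Fin n → ℝ := fun α => 2 * h 0 0 α ^ 2 + 2 * h 0 1 α ^ 2 with hg
  have hgnn : ∀ α : Fin n, 0 ≤ g α := by
    intro α; simp only [hg]; positivity
  have hS : (∑ i, ∑ k, ∑ α, h i k α ^ 2) = ∑ α, g α := by
    simp only [Fin.sum_univ_two, ← Finset.sum_add_distrib]
    apply Finset.sum_congr rfl
    intro α _
    have h11 : h 1 1 α = - h 0 0 α := by linarith [htrace α]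
    rw [hsymm 1 0 α, h11, hg]; ring
  set G : Fin 2 → ℝ := fun j => 2 * Hext2 h 0 0 j ^ 2 + 2 * Hext2 h 0 1 j ^ 2 with hG
  -- rewrite heq
  have key : (∑ α, g α) = a ^ 2 * G 0 + b ^ 2 * G 1 := by
    rw [← hS]
    have hcross : Hext2 h 0 0 0 * Hext2 h 0 1 1 + Hext2 h 0 1 0 * Hext2 h 1 1 1 +
        Hext2 h 0 0 1 * Hext2 h 0 1 0 + Hext2 h 0 1 1 * Hext2 h 1 1 0 = 0 := by
      rw [hH11, hH11]; ring
    have hlast : (∑ i, ∑ k, lam i ^ 2 * Hext2 h i k i ^ 2)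
        = (a ^ 2 * G 0 + b ^ 2 * G 1) / 2 := by
      simp only [Fin.sum_univ_two, hH11, hH10, hG, ← ha, ← hb]; ring
    rw [hcross, hlast] at heq
    linear_combination heq
  have hGnn : ∀ j, 0 ≤ G j := by intro j; simp only [hG]; positivity
  -- G 0 + G 1 ≤ ∑ g
  have hmono : G 0 + G 1 ≤ ∑ α, g α := by
    rcases Nat.lt_or_ge 1 n with h2 | h2
    · have hH1 : ∀ i k, Hext2 h i k 1 = h i k ⟨1, h2⟩ := by
        intro i k; unfold Hext2
        rw [dif_pos (show ((1 : Fin 2) : ℕ) < n from h2)]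
        exact congrArg _ (Fin.ext v1)
      have e0 : G 0 = g ⟨0, by omega⟩ := by
        simp only [hG, hg, hH0]
      have e1 : G 1 = g ⟨1, h2⟩ := by
        simp only [hG, hg, hH1]
      rw [e0, e1, ← Finset.sum_pair
        (by simp [Fin.ext_iff] : (⟨0, by omega⟩ : Fin n) ≠ ⟨1, h2⟩)]
      apply Finset.sum_le_sum_of_subset_of_nonneg (Finset.subset_univ _)
      intro α _ _; exact hgnn α
    · have hn1 : n = 1 := by omega
      subst hn1
      have hH1z : ∀ i k, Hext2 h i k 1 = 0 := by
        intro i k; unfold Hext2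
        rw [dif_neg (by omega : ¬ ((1 : Fin 2) : ℕ) < 1)]
      have e1 : G 1 = 0 := by simp only [hG, hH1z]; ring
      have e0 : G 0 = g ⟨0, by omega⟩ := by simp only [hG, hg, hH0]
      rw [e0, e1, Fin.sum_univ_one]
      have : (⟨0, by omega⟩ : Fin 1) = 0 := rfl
      rw [this]; linarith
  have ha2 : a ^ 2 < 1 := hlam 0
  have hb2 : b ^ 2 < 1 := hlam 1
  have hG0 : G 0 = 0 := by nlinarith [hGnn 0, hGnn 1]
  have hG1 : G 1 = 0 := by nlinarith [hGnn 0, hGnn 1]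
  have hsum0 : (∑ α, g α) = 0 := by rw [key, hG0, hG1]; ring
  have hgz : ∀ α : Fin n, g α = 0 := fun α =>
    (Finset.sum_eq_zero_iff_of_nonneg (fun α _ => hgnn α)).mp hsum0 α (Finset.mem_univ α)
  intro i k α
  have hz := hgz α
  simp only [hg] at hz
  have h00 : h 0 0 α = 0 := by nlinarith
  have h01 : h 0 1 α = 0 := by nlinarith
  have h11 : h 1 1 α = 0 := by have := htrace α; linarith
  fin_cases i <;> fin_cases k
  · exact h00
  · exact h01
  · exact (hsymm 1 0 α).trans h01
  · exact h11
end

section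
/- Let m ≥ 2 be an integer, c ∈ ℝ, and for r > 0 set φ(r) = c (sinh r)^{1−m} ∫₀^r (sinh t)^{m−1} dt. Then for every r > 0: φ(r)² ≤ c²/(m−1)², and hence ( φ(r)/√(1 + φ(r)²) )² ≤ ( c²/(m−1)² ) / ( 1 + c²/(m−1)² ) < 1. -/
lemma sinh_pow_integral_le (n : ℕ) (hn : 1 ≤ n) (r : ℝ) (hr : 0 < r) :
    (n : ℝ) * (∫ t in (0:ℝ)..r, Real.sinh t ^ n) ≤ Real.sinh r ^ n := by
  have hderiv : ∀ t ∈ Set.uIcc (0:ℝ) r, HasDerivAt (fun s => Real.sinh s ^ n)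
      ((n : ℝ) * Real.sinh t ^ (n - 1) * Real.cosh t) t := by
    intro t _
    have h := (Real.hasDerivAt_sinh t).pow n
    exact h.congr_deriv (by ring)
  have hcont : IntervalIntegrable (fun t => (n:ℝ) * Real.sinh t ^ (n-1) * Real.cosh t)
      MeasureTheory.volume 0 r := (Continuous.intervalIntegrable (by continuity) 0 r)
  have hftc := intervalIntegral.integral_eq_sub_of_hasDerivAt hderiv hcont
  have h0 : Real.sinh (0:ℝ) ^ n = 0 := by
    simp [Real.sinh_zero, zero_pow (by omega : n ≠ 0)]
  rw [h0, sub_zero] at hftc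
  rw [← hftc, ← intervalIntegral.integral_const_mul]
  apply intervalIntegral.integral_mono_on hr.le
  · exact Continuous.intervalIntegrable (by continuity) 0 r
  · exact hcont
  · intro t ht
    have hts : 0 ≤ Real.sinh t := Real.sinh_nonneg_iff.mpr ht.1
    have hle : Real.sinh t ≤ Real.cosh t := by
      rw [Real.sinh_eq, Real.cosh_eq]
      have := Real.exp_pos (-t)
      linarith
    have : Real.sinh t ^ n = Real.sinh t ^ (n-1) * Real.sinh t := by
      rw [← pow_succ]; congr 1; omega
    rw [this]
    have := mul_le_mul_of_nonneg_left hle (pow_nonneg hts (n-1))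
    nlinarith [this, (Nat.cast_nonneg n : (0:ℝ) ≤ n), (Nat.one_le_cast.mpr hn : (1:ℝ) ≤ n)]

/-- **Uniform gradient bound for the constant-mean-curvature graphs over hyperbolic
space** (Proposition 10 of the paper).  For `m ≥ 2`, `c ∈ ℝ` and
`φ(r) = c (sinh r)^{1-m} ∫₀^r (sinh t)^{m-1} dt`, one has `φ(r)² ≤ c²/(m-1)²` and hence
`(φ/√(1+φ²))² ≤ (c²/(m-1)²)/(1 + c²/(m-1)²) < 1` for every `r > 0`. -/
theorem cmc_graph_gradient_bound (m : ℕ) (hm : 2 ≤ m) (c : ℝ) :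
    let φ : ℝ → ℝ := fun r =>
      c * (∫ t in (0 : ℝ)..r, Real.sinh t ^ (m - 1)) / Real.sinh r ^ (m - 1)
    ∀ r : ℝ, 0 < r →
      φ r ^ 2 ≤ c ^ 2 / ((m : ℝ) - 1) ^ 2 ∧
      (φ r / Real.sqrt (1 + φ r ^ 2)) ^ 2 ≤
        (c ^ 2 / ((m : ℝ) - 1) ^ 2) / (1 + c ^ 2 / ((m : ℝ) - 1) ^ 2) ∧
      (c ^ 2 / ((m : ℝ) - 1) ^ 2) / (1 + c ^ 2 / ((m : ℝ) - 1) ^ 2) < 1 := by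
  intro φ r hr
  set n := m - 1 with hn
  have hn1 : 1 ≤ n := by omega
  have hncast : ((m : ℝ) - 1) = (n : ℝ) := by
    have : (m : ℝ) = ((n + 1 : ℕ) : ℝ) := by congr 1; omega
    push_cast [this]; ring
  have hnpos : (0:ℝ) < n := by exact_mod_cast hn1
  set I := ∫ t in (0:ℝ)..r, Real.sinh t ^ n with hI
  have hS : (0:ℝ) < Real.sinh r ^ n := pow_pos (Real.sinh_pos_iff.mpr hr) n
  have hI0 : 0 ≤ I := intervalIntegral.integral_nonneg hr.le
    (fun t ht => pow_nonneg (Real.sinh_nonneg_iff.mpr ht.1) n)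
  have hkey : (n : ℝ) * I ≤ Real.sinh r ^ n := sinh_pow_integral_le n hn1 r hr
  have hφ : φ r = c * I / Real.sinh r ^ n := rfl
  -- ratio bound
  have hratio : I / Real.sinh r ^ n ≤ 1 / n := by
    rw [div_le_div_iff₀ hS hnpos]; linarith [hkey]
  have hratio0 : 0 ≤ I / Real.sinh r ^ n := div_nonneg hI0 hS.le
  have h1 : φ r ^ 2 ≤ c ^ 2 / ((m : ℝ) - 1) ^ 2 := by
    rw [hφ, hncast]
    have : c * I / Real.sinh r ^ n = c * (I / Real.sinh r ^ n) := by ring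
    rw [this, mul_pow]
    have h2 : (I / Real.sinh r ^ n) ^ 2 ≤ (1/n : ℝ)^2 :=
      pow_le_pow_left₀ hratio0 hratio 2
    calc c ^ 2 * (I / Real.sinh r ^ n) ^ 2 ≤ c ^2 * (1/n)^2 :=
          mul_le_mul_of_nonneg_left h2 (sq_nonneg c)
      _ = c^2 / (n:ℝ)^2 := by ring
  refine ⟨h1, ?_, ?_⟩
  · set A := c ^ 2 / ((m : ℝ) - 1) ^ 2 with hA
    have hA0 : 0 ≤ A := by
      apply div_nonneg (sq_nonneg c) (sq_nonneg _)
    set x := φ r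
    have hx2 : x ^ 2 ≤ A := h1
    have hpos : (0:ℝ) < 1 + x ^ 2 := by positivity
    have hsq : Real.sqrt (1 + x ^ 2) ^ 2 = 1 + x ^ 2 := Real.sq_sqrt hpos.le
    rw [div_pow, hsq, div_le_div_iff₀ hpos (by positivity)]
    nlinarith [sq_nonneg x]
  · have hA0 : 0 ≤ c ^ 2 / ((m : ℝ) - 1) ^ 2 := div_nonneg (sq_nonneg c) (sq_nonneg _)
    rw [div_lt_one (by positivity)]; linarith
end

section
/- Let m ≥ 2 be an integer, and for c ∈ ℝ define f_c(r) = ∫₀^r c ψ(t)/√(1 + c² ψ(t)²) dt for r ≥ 0, where ψ(t) = (sinh t)^{1−m} ∫₀^t (sinh s)^{m−1} ds for t > 0. Then for every fixed r ≥ 0, the map c ↦ f_c(r) + c is a continuous, strictly increasing bijection from ℝ onto ℝ. -/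
open Real MeasureTheory intervalIntegral Filter

noncomputable def Fsat (x : ℝ) : ℝ := x / Real.sqrt (1 + x ^ 2)

lemma one_add_sq_pos (x : ℝ) : (0:ℝ) < 1 + x ^ 2 := by positivity

lemma sqrt_pos' (x : ℝ) : 0 < Real.sqrt (1 + x ^ 2) :=
  Real.sqrt_pos.2 (one_add_sq_pos x)

lemma Fsat_abs_le_one (x : ℝ) : |Fsat x| ≤ 1 := by
  rw [Fsat, abs_div, abs_of_pos (sqrt_pos' x)]
  rw [div_le_one (sqrt_pos' x)]
  have : |x| = Real.sqrt (x ^ 2) := (Real.sqrt_sq_eq_abs x).symm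
  rw [this]
  exact Real.sqrt_le_sqrt (by linarith)

lemma Fsat_hasDerivAt (x : ℝ) :
    HasDerivAt Fsat (1 / ((1 + x ^ 2) * Real.sqrt (1 + x ^ 2))) x := by
  have h1 : HasDerivAt (fun y : ℝ => 1 + y ^ 2) (2 * x) x := by
    simpa using (hasDerivAt_pow 2 x).const_add 1
  have hs : HasDerivAt (fun y : ℝ => Real.sqrt (1 + y ^ 2))
      (2 * x / (2 * Real.sqrt (1 + x ^ 2))) x :=
    (Real.hasDerivAt_sqrt (ne_of_gt (one_add_sq_pos x))).comp x h1 |>.congr_deriv (by ring)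
  have := (hasDerivAt_id x).div hs (ne_of_gt (sqrt_pos' x))
  refine (this : HasDerivAt Fsat _ x).congr_deriv ?_
  symm
  have hsq : Real.sqrt (1 + x ^ 2) ^ 2 = 1 + x ^ 2 :=
    Real.sq_sqrt (le_of_lt (one_add_sq_pos x))
  rw [hsq]
  have hs0 := sqrt_pos' x
  field_simp
  simp only [id_eq]
  linear_combination (-1 : ℝ) * hsq

lemma Fsat_strictMono : StrictMono Fsat := by
  apply strictMono_of_deriv_pos
  intro x
  rw [(Fsat_hasDerivAt x).deriv]
  positivity

lemma Fsat_lipschitz : LipschitzWith 1 Fsat := by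
  apply lipschitzWith_of_nnnorm_deriv_le (fun x => (Fsat_hasDerivAt x).differentiableAt)
  intro x
  rw [(Fsat_hasDerivAt x).deriv]
  rw [← NNReal.coe_le_coe]
  push_cast
  rw [Real.norm_eq_abs, abs_of_pos (by positivity)]
  rw [div_le_one (by positivity)]
  nlinarith [sqrt_pos' x, Real.sq_sqrt (le_of_lt (one_add_sq_pos x)), Real.one_le_sqrt.2 (by nlinarith : (1:ℝ) ≤ 1 + x ^ 2)]

noncomputable def psi (m : ℕ) (t : ℝ) : ℝ :=
  (∫ s in (0 : ℝ)..t, Real.sinh s ^ (m - 1)) / Real.sinh t ^ (m - 1)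

lemma sinh_pow_intInt (m : ℕ) (a b : ℝ) :
    IntervalIntegrable (fun s => Real.sinh s ^ (m - 1)) volume a b :=
  (Real.continuous_sinh.pow _).intervalIntegrable a b

lemma psi_nonneg (m : ℕ) {t : ℝ} (ht : 0 ≤ t) : 0 ≤ psi m t := by
  apply div_nonneg
  · apply intervalIntegral.integral_nonneg ht
    intro s hs
    exact pow_nonneg (Real.sinh_nonneg_iff.2 hs.1) _
  · exact pow_nonneg (Real.sinh_nonneg_iff.2 ht) _

lemma psi_le (m : ℕ) {t : ℝ} (ht : 0 ≤ t) : psi m t ≤ t := by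
  rcases eq_or_lt_of_le ht with h | h
  · simp [psi, ← h]
  · rw [psi, div_le_iff₀ (pow_pos (Real.sinh_pos_iff.2 h) _)]
    calc (∫ s in (0:ℝ)..t, Real.sinh s ^ (m - 1))
        ≤ ∫ _ in (0:ℝ)..t, Real.sinh t ^ (m - 1) := by
          apply intervalIntegral.integral_mono_on ht (sinh_pow_intInt m 0 t)
            (intervalIntegrable_const)
          intro s hs
          exact pow_le_pow_left₀ (Real.sinh_nonneg_iff.2 hs.1)
            (Real.sinh_le_sinh.2 hs.2) _
      _ = t * Real.sinh t ^ (m - 1) := by simp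

lemma psi_measurable (m : ℕ) : Measurable (psi m) := by
  have h1 : Continuous (fun t : ℝ => ∫ s in (0:ℝ)..t, Real.sinh s ^ (m - 1)) :=
    intervalIntegral.continuous_primitive (fun a b => sinh_pow_intInt m a b) 0
  exact h1.measurable.div ((Real.continuous_sinh.pow _).measurable)

lemma Fsat_continuous : Continuous Fsat := Fsat_lipschitz.continuous

lemma g_intInt (m : ℕ) (c r : ℝ) (hr : 0 ≤ r) :
    IntervalIntegrable (fun t => Fsat (c * psi m t)) volume 0 r := by
  rw [intervalIntegrable_iff_integrableOn_Ioc_of_le hr]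
  apply Integrable.mono' (integrable_const (1:ℝ))
  · exact ((Fsat_continuous.measurable.comp
      (measurable_const.mul (psi_measurable m))).aestronglyMeasurable)
  · exact Filter.Eventually.of_forall fun t => by
      simpa [Real.norm_eq_abs] using Fsat_abs_le_one (c * psi m t)

lemma psi_intInt (m : ℕ) (r : ℝ) (hr : 0 ≤ r) :
    IntervalIntegrable (psi m) volume 0 r := by
  rw [intervalIntegrable_iff_integrableOn_Ioc_of_le hr]
  apply Integrable.mono' (integrable_const r)
  · exact (psi_measurable m).aestronglyMeasurable
  · rw [MeasureTheory.ae_restrict_iff' measurableSet_Ioc]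
    refine Filter.Eventually.of_forall fun t ht => ?_
    rw [Real.norm_eq_abs, abs_of_nonneg (psi_nonneg m ht.1.le)]
    exact (psi_le m ht.1.le).trans ht.2

noncomputable def fcd (m : ℕ) (c r : ℝ) : ℝ := ∫ t in (0:ℝ)..r, Fsat (c * psi m t)

lemma fcd_mono (m : ℕ) {c₁ c₂ r : ℝ} (hr : 0 ≤ r) (hc : c₁ ≤ c₂) :
    fcd m c₁ r ≤ fcd m c₂ r := by
  apply intervalIntegral.integral_mono_on hr (g_intInt m c₁ r hr) (g_intInt m c₂ r hr)
  intro t ht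
  exact Fsat_strictMono.monotone (mul_le_mul_of_nonneg_right hc (psi_nonneg m ht.1))

lemma fcd_bound (m : ℕ) {c r : ℝ} (hr : 0 ≤ r) : |fcd m c r| ≤ r := by
  have := intervalIntegral.norm_integral_le_of_norm_le_const
    (a := 0) (b := r) (C := 1) (f := fun t => Fsat (c * psi m t))
    (fun t _ => by simpa [Real.norm_eq_abs] using Fsat_abs_le_one (c * psi m t))
  rw [Real.norm_eq_abs] at this
  calc |fcd m c r| ≤ 1 * |r - 0| := this
    _ = r := by rw [one_mul, sub_zero, abs_of_nonneg hr]

lemma fcd_lip (m : ℕ) {c₁ c₂ r : ℝ} (hr : 0 ≤ r) :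
    |fcd m c₁ r - fcd m c₂ r| ≤ |c₁ - c₂| * (∫ t in (0:ℝ)..r, psi m t) := by
  have h1 := g_intInt m c₁ r hr
  have h2 := g_intInt m c₂ r hr
  rw [fcd, fcd, ← intervalIntegral.integral_sub h1 h2]
  calc |∫ t in (0:ℝ)..r, (Fsat (c₁ * psi m t) - Fsat (c₂ * psi m t))|
      ≤ ∫ t in (0:ℝ)..r, |Fsat (c₁ * psi m t) - Fsat (c₂ * psi m t)| :=
        intervalIntegral.abs_integral_le_integral_abs hr
    _ ≤ ∫ t in (0:ℝ)..r, |c₁ - c₂| * psi m t := by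
        apply intervalIntegral.integral_mono_on hr ((h1.sub h2).abs)
          ((psi_intInt m r hr).const_mul _)
        intro t ht
        have := Fsat_lipschitz.dist_le_mul (c₁ * psi m t) (c₂ * psi m t)
        rw [Real.dist_eq, Real.dist_eq, NNReal.coe_one, one_mul] at this
        calc |Fsat (c₁ * psi m t) - Fsat (c₂ * psi m t)|
            ≤ |c₁ * psi m t - c₂ * psi m t| := this
          _ = |c₁ - c₂| * psi m t := by
              rw [← sub_mul, abs_mul, abs_of_nonneg (psi_nonneg m ht.1)]
    _ = |c₁ - c₂| * ∫ t in (0:ℝ)..r, psi m t := by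
        rw [intervalIntegral.integral_const_mul]


/-- **The foliation property of the constant-mean-curvature graphs over hyperbolic
space** (Proposition 10 of the paper).  With
`ψ(t) = (sinh t)^{1-m} ∫₀^t (sinh s)^{m-1} ds` and
`f_c(r) = ∫₀^r c ψ(t)/√(1 + c² ψ(t)²) dt`, for every fixed `r ≥ 0` the map
`c ↦ f_c(r) + c` is a continuous, strictly increasing bijection of `ℝ` onto `ℝ`. -/
theorem cmc_foliation (m : ℕ) (hm : 2 ≤ m) :
    let ψ : ℝ → ℝ := fun t =>
      (∫ s in (0 : ℝ)..t, Real.sinh s ^ (m - 1)) / Real.sinh t ^ (m - 1)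
    let fc : ℝ → ℝ → ℝ := fun c r =>
      ∫ t in (0 : ℝ)..r, c * ψ t / Real.sqrt (1 + c ^ 2 * ψ t ^ 2)
    ∀ r : ℝ, 0 ≤ r →
      Continuous (fun c => fc c r + c) ∧
      StrictMono (fun c => fc c r + c) ∧
      Function.Bijective (fun c => fc c r + c) := by

  intro ψ fc r hr
  have key : (fun c : ℝ => fc c r + c) = fun c => fcd m c r + c := by
    funext c
    have : fc c r = fcd m c r := by
      show (∫ t in (0:ℝ)..r, c * psi m t / Real.sqrt (1 + c ^ 2 * psi m t ^ 2))
          = fcd m c r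
      rw [fcd]
      congr 1
      funext t
      rw [Fsat, mul_pow]
    rw [this]
  rw [key]
  have hmono : StrictMono (fun c => fcd m c r + c) := by
    intro a b hab
    have := fcd_mono m hr hab.le
    dsimp only
    linarith
  have hcont : Continuous (fun c => fcd m c r + c) := by
    set K := ∫ t in (0:ℝ)..r, psi m t with hKdef
    have hK : 0 ≤ K :=
      intervalIntegral.integral_nonneg hr (fun t ht => psi_nonneg m ht.1)
    have hlip : LipschitzWith K.toNNReal (fun c => fcd m c r) := by
      apply LipschitzWith.of_dist_le_mul
      intro a b
      rw [Real.dist_eq, Real.dist_eq, Real.coe_toNNReal K hK]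
      calc |fcd m a r - fcd m b r| ≤ |a - b| * K := fcd_lip m hr
        _ = K * |a - b| := mul_comm _ _
    exact hlip.continuous.add continuous_id
  refine ⟨hcont, hmono, hmono.injective, ?_⟩
  apply hcont.surjective
  · apply Filter.tendsto_atTop_mono (fun c => ?_)
      (Filter.tendsto_atTop_add_const_right _ (-r) Filter.tendsto_id)
    have := (abs_le.1 (fcd_bound m hr (c := c))).1
    simp only [id]
    linarith
  · apply Filter.tendsto_atBot_mono (fun c => ?_)
      (Filter.tendsto_atBot_add_const_right _ r Filter.tendsto_id)
    have := (abs_le.1 (fcd_bound m hr (c := c))).2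
    simp only [id]
    linarith
end
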